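/- arXiv:2405.13598 — 2 statements merged into one kernel-verified Lean document; each statement's English description precedes it below -/
import Mathlib

section
/- Let 𝔖 be the Lie algebra over ℂ with underlying module the free ℂ[x]-module on generators E, F, H, with ℂ[x]-bilinear bracket determined by [H,E] = 2E, [H,F] = -2F, [E,F] = H⊗p, where p ∈ ℂ[x] is a fixed nonzero non-invertible polynomial (e.g. p = 4x³ - g₂x - g₃). Then 𝔖 is not perfect: the element H (= H⊗1) does not lie in the derived ideal [𝔖,𝔖]. In particular, 𝔖 is not isomorphic to sl₂(ℂ)⊗_ℂ A for any commutative unital ℂ-algebra A. -/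
open scoped TensorProduct

namespace StauAux
open LieAlgebra.SpecialLinear

noncomputable def e2 : sl (Fin 2) ℂ := LieAlgebra.SpecialLinear.single 0 1 (by decide) (1:ℂ)
noncomputable def f2 : sl (Fin 2) ℂ := LieAlgebra.SpecialLinear.single 1 0 (by decide) (1:ℂ)
noncomputable def h2 : sl (Fin 2) ℂ := ⁅e2, f2⁆

lemma bhe : ⁅h2, e2⁆ = (2:ℂ) • e2 := by
  apply Subtype.ext
  show ((e2.val*f2.val - f2.val*e2.val) * e2.val
      - e2.val * (e2.val*f2.val - f2.val*e2.val)) = (2:ℂ) • e2.val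
  simp only [e2, f2, val_single]
  ext i j
  fin_cases i <;> fin_cases j <;>
    simp [Matrix.mul_apply, Matrix.single, Fin.sum_univ_two, two_smul] <;> norm_num

lemma bhf : ⁅h2, f2⁆ = (-2:ℂ) • f2 := by
  apply Subtype.ext
  show ((e2.val*f2.val - f2.val*e2.val) * f2.val
      - f2.val * (e2.val*f2.val - f2.val*e2.val)) = (-2:ℂ) • f2.val
  simp only [e2, f2, val_single]
  ext i j
  fin_cases i <;> fin_cases j <;>
    simp [Matrix.mul_apply, Matrix.single, Fin.sum_univ_two, two_smul] <;> norm_num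

lemma decomp (m : sl (Fin 2) ℂ) :
    m = (m.val 0 0) • h2 + (m.val 0 1) • e2 + (m.val 1 0) • f2 := by
  have htr : m.val 1 1 = - m.val 0 0 := by
    have h0 : Matrix.trace (m.val) = 0 := m.2
    rw [Matrix.trace_fin_two] at h0
    linear_combination h0
  apply Subtype.ext
  show m.val = (m.val 0 0) • (e2.val*f2.val - f2.val*e2.val)
      + (m.val 0 1) • e2.val + (m.val 1 0) • f2.val
  simp only [e2, f2, val_single]
  ext i j
  fin_cases i <;> fin_cases j <;>
    simp [Matrix.mul_apply, Matrix.single, Fin.sum_univ_two, htr]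

lemma spanned (A : Type*) [CommRing A] [Algebra ℂ A]
    (z : A ⊗[ℂ] sl (Fin 2) ℂ) :
    z ∈ Submodule.span ℂ {w : A ⊗[ℂ] sl (Fin 2) ℂ |
      ∃ u v : A ⊗[ℂ] sl (Fin 2) ℂ, ⁅u, v⁆ = w} := by
  set sb : Set (A ⊗[ℂ] sl (Fin 2) ℂ) := {w | ∃ u v : A ⊗[ℂ] sl (Fin 2) ℂ, ⁅u, v⁆ = w} with hsb
  induction z using TensorProduct.induction_on with
  | zero => exact zero_mem _
  | add x y hx hy => exact add_mem hx hy
  | tmul a m =>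
    have hmh : a ⊗ₜ[ℂ] h2 ∈ Submodule.span ℂ sb := by
      apply Submodule.subset_span
      refine ⟨(1:A) ⊗ₜ e2, a ⊗ₜ f2, ?_⟩
      rw [LieAlgebra.ExtendScalars.bracket_tmul, one_mul]
      rfl
    have hme : a ⊗ₜ[ℂ] e2 ∈ Submodule.span ℂ sb := by
      have heq : a ⊗ₜ[ℂ] e2 = (2⁻¹:ℂ) • ⁅(1:A) ⊗ₜ[ℂ] h2, a ⊗ₜ[ℂ] e2⁆ := by
        rw [LieAlgebra.ExtendScalars.bracket_tmul, one_mul, bhe,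
          TensorProduct.tmul_smul, smul_smul]
        norm_num
      rw [heq]
      exact Submodule.smul_mem _ _ (Submodule.subset_span ⟨_, _, rfl⟩)
    have hmf : a ⊗ₜ[ℂ] f2 ∈ Submodule.span ℂ sb := by
      have heq : a ⊗ₜ[ℂ] f2 = (-2⁻¹:ℂ) • ⁅(1:A) ⊗ₜ[ℂ] h2, a ⊗ₜ[ℂ] f2⁆ := by
        rw [LieAlgebra.ExtendScalars.bracket_tmul, one_mul, bhf,
          TensorProduct.tmul_smul, smul_smul]
        norm_num
      rw [heq]
      exact Submodule.smul_mem _ _ (Submodule.subset_span ⟨_, _, rfl⟩)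
    have hm := decomp m
    rw [hm, TensorProduct.tmul_add, TensorProduct.tmul_add,
      TensorProduct.tmul_smul, TensorProduct.tmul_smul, TensorProduct.tmul_smul]
    exact add_mem (add_mem (Submodule.smul_mem _ _ hmh) (Submodule.smul_mem _ _ hme))
      (Submodule.smul_mem _ _ hmf)

end StauAux

/-- Let `𝔖` be a complex Lie algebra which is a free `ℂ[x]`-module with basis
`E, F, H`, with `ℂ[x]`-bilinear bracket determined by `[H,E] = 2E`,
`[H,F] = -2F`, `[E,F] = p•H` for a fixed nonzero non-invertible polynomial `p`.
Then `𝔖` is not perfect: `H` does not lie in the derived ideal `[𝔖,𝔖]`. In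
particular `𝔖` is not isomorphic (as a Lie algebra over `ℂ`) to
`sl₂(ℂ) ⊗ A` for any commutative unital `ℂ`-algebra `A`. -/
theorem S_tau_not_perfect {L : Type*} [LieRing L] [LieAlgebra ℂ L]
    [Module (Polynomial ℂ) L] [IsScalarTower ℂ (Polynomial ℂ) L]
    (E F H : L) (b : Module.Basis (Fin 3) (Polynomial ℂ) L)
    (hb : b 0 = E ∧ b 1 = F ∧ b 2 = H)
    (hbil : ∀ (q : Polynomial ℂ) (u v : L), ⁅q • u, v⁆ = q • ⁅u, v⁆)
    (p : Polynomial ℂ) (hp0 : p ≠ 0) (hpu : ¬ IsUnit p)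
    (hHE : ⁅H, E⁆ = (2 : ℂ) • E) (hHF : ⁅H, F⁆ = (-2 : ℂ) • F)
    (hEF : ⁅E, F⁆ = p • H) :
    H ∉ ⁅(⊤ : LieIdeal ℂ L), (⊤ : LieIdeal ℂ L)⁆ ∧
    ∀ (A : Type*) [CommRing A] [Algebra ℂ A],
      ¬ ∃ e : L ≃ₗ[ℂ] (A ⊗[ℂ] LieAlgebra.SpecialLinear.sl (Fin 2) ℂ),
        ∀ u v : L, e ⁅u, v⁆ = ⁅e u, e v⁆ := by
  obtain ⟨hb0, hb1, hb2⟩ := hb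
  have hbil' : ∀ (r : Polynomial ℂ) (u v : L), ⁅u, r • v⁆ = r • ⁅u, v⁆ := by
    intro r u v
    rw [← lie_skew, hbil, ← lie_skew u v, smul_neg]
  -- the "H-coordinate mod p" map
  set c : L →ₗ[Polynomial ℂ] Polynomial ℂ := b.coord 2 with hc
  set q : Polynomial ℂ →ₗ[Polynomial ℂ] (Polynomial ℂ ⧸ Ideal.span {p}) :=
    Submodule.mkQ (Ideal.span {p}) with hq
  have hcE : c E = 0 := by rw [← hb0, hc, Module.Basis.coord_apply, Module.Basis.repr_self]; simp
  have hcF : c F = 0 := by rw [← hb1, hc, Module.Basis.coord_apply, Module.Basis.repr_self]; simp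
  have hcH : c H = 1 := by rw [← hb2, hc, Module.Basis.coord_apply, Module.Basis.repr_self]; simp
  -- the bracket composed with q ∘ c, as a bilinear map
  set B : L →ₗ[Polynomial ℂ] L →ₗ[Polynomial ℂ] (Polynomial ℂ ⧸ Ideal.span {p}) :=
    LinearMap.mk₂ (Polynomial ℂ) (fun u v => q (c ⁅u, v⁆))
      (fun u u' v => by rw [add_lie, map_add, map_add])
      (fun r u v => by rw [hbil, map_smul, map_smul])
      (fun u v v' => by rw [lie_add, map_add, map_add])
      (fun r u v => by rw [hbil', map_smul, map_smul]) with hB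
  have hB0 : B = 0 := by
    apply b.ext; intro i
    apply b.ext; intro j
    fin_cases i <;> fin_cases j <;>
      simp only [hB, LinearMap.mk₂_apply, LinearMap.zero_apply, Fin.zero_eta, Fin.mk_one,
        Fin.reduceFinMk, hb0, hb1, hb2] <;>
      [skip; skip; skip; skip; skip; skip; skip; skip; skip]
    · rw [lie_self]; simp
    · rw [hEF, map_smul, hcH, smul_eq_mul, mul_one, hq, Submodule.mkQ_apply,
        Submodule.Quotient.mk_eq_zero]
      exact Ideal.subset_span rfl
    · rw [← lie_skew, hHE, map_neg, LinearMap.map_smul_of_tower, hcE]; simp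
    · rw [← lie_skew, hEF, map_neg, map_smul, hcH]
      simp only [smul_eq_mul, mul_one, map_neg, neg_eq_zero, hq, Submodule.mkQ_apply,
        Submodule.Quotient.mk_eq_zero]
      exact Ideal.subset_span rfl
    · rw [lie_self]; simp
    · rw [← lie_skew, hHF, map_neg, LinearMap.map_smul_of_tower, hcF]; simp
    · rw [hHE, LinearMap.map_smul_of_tower, hcE]; simp
    · rw [hHF, LinearMap.map_smul_of_tower, hcF]; simp
    · rw [lie_self]; simp
  have hbrk : ∀ u v : L, q (c ⁅u, v⁆) = 0 := by
    intro u v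
    have h := LinearMap.congr_fun (LinearMap.congr_fun hB0 u) v
    simpa [hB] using h
  -- the kernel of `q ∘ c` is a Lie ideal containing all brackets but not `H`
  set f : L →ₗ[ℂ] (Polynomial ℂ ⧸ Ideal.span {p}) :=
    (q.comp c).restrictScalars ℂ with hfdef
  have hfbrk : ∀ u v : L, f ⁅u, v⁆ = 0 := fun u v => hbrk u v
  let K : LieIdeal ℂ L :=
    { LinearMap.ker f with
      lie_mem := fun {x m} _ => LinearMap.mem_ker.mpr (hfbrk x m) }
  have hle : ⁅(⊤ : LieIdeal ℂ L), (⊤ : LieIdeal ℂ L)⁆ ≤ K := by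
    rw [LieSubmodule.lieIdeal_oper_eq_span, LieSubmodule.lieSpan_le]
    rintro m ⟨x, n, rfl⟩
    exact LinearMap.mem_ker.mpr (hfbrk x n)
  have hHnot : H ∉ K := by
    intro hmem
    have h0 : f H = 0 := hmem
    have h1' : q (c H) = 0 := h0
    rw [hcH, hq, Submodule.mkQ_apply, Submodule.Quotient.mk_eq_zero,
      Ideal.mem_span_singleton] at h1'
    exact hpu (isUnit_of_dvd_one h1')
  have part1 : H ∉ ⁅(⊤ : LieIdeal ℂ L), (⊤ : LieIdeal ℂ L)⁆ :=
    fun h => hHnot (hle h)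
  refine ⟨part1, ?_⟩
  rintro A _ _ ⟨e, he⟩
  apply part1
  have hall := StauAux.spanned A
  -- transport back along e
  set sb : Set (A ⊗[ℂ] LieAlgebra.SpecialLinear.sl (Fin 2) ℂ) :=
    {w | ∃ u v : A ⊗[ℂ] LieAlgebra.SpecialLinear.sl (Fin 2) ℂ, ⁅u, v⁆ = w} with hsb
  have hmap : H ∈ (Submodule.span ℂ sb).map (e.symm : _ →ₗ[ℂ] L) :=
    ⟨e H, hall _, e.symm_apply_apply H⟩
  rw [Submodule.map_span] at hmap
  set sL : Set L := {m | ∃ (x : (⊤ : LieIdeal ℂ L)) (n : (⊤ : LieIdeal ℂ L)),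
    ⁅(x : L), (n : L)⁆ = m} with hsL
  have hsub : (e.symm : _ →ₗ[ℂ] L) '' sb ⊆ sL := by
    rintro _ ⟨w, ⟨u, v, rfl⟩, rfl⟩
    refine ⟨⟨e.symm u, trivial⟩, ⟨e.symm v, trivial⟩, ?_⟩
    show ⁅e.symm u, e.symm v⁆ = e.symm ⁅u, v⁆
    apply e.injective
    rw [he, e.apply_symm_apply, e.apply_symm_apply, e.apply_symm_apply]
  have : H ∈ Submodule.span ℂ sL := Submodule.span_mono hsub hmap
  rw [← LieSubmodule.lieIdeal_oper_eq_linear_span] at this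
  exact this
end

section
/- Let p ∈ ℂ[x] be a polynomial of degree 3 and let 𝔖 be the Lie algebra that is the free ℂ[x]-module on E, F, H with ℂ[x]-bilinear bracket [H,E] = 2E, [H,F] = -2F, [E,F] = H⊗p. Then the abelianisation 𝔖/[𝔖,𝔖] is isomorphic as a ℂ-vector space to ℂ[x]/(p), and hence has dimension 3 over ℂ. -/
open Polynomial

/-- Let `p ∈ ℂ[x]` have degree 3 and let `𝔖` be a complex Lie algebra which is
a free `ℂ[x]`-module on `E, F, H` with `ℂ[x]`-bilinear bracket `[H,E] = 2E`,
`[H,F] = -2F`, `[E,F] = p•H`. Then the abelianisation `𝔖/[𝔖,𝔖]` is isomorphic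
as a `ℂ`-vector space to `ℂ[x]/(p)`, and hence is 3-dimensional over `ℂ`. -/
theorem S_tau_abelianisation {L : Type*} [LieRing L] [LieAlgebra ℂ L]
    [Module (Polynomial ℂ) L] [IsScalarTower ℂ (Polynomial ℂ) L]
    (E F H : L) (b : Module.Basis (Fin 3) (Polynomial ℂ) L)
    (hb : b 0 = E ∧ b 1 = F ∧ b 2 = H)
    (hbil : ∀ (q : Polynomial ℂ) (u v : L), ⁅q • u, v⁆ = q • ⁅u, v⁆)
    (p : Polynomial ℂ) (hp : p.degree = 3)
    (hHE : ⁅H, E⁆ = (2 : ℂ) • E) (hHF : ⁅H, F⁆ = (-2 : ℂ) • F)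
    (hEF : ⁅E, F⁆ = p • H) :
    Nonempty ((L ⧸ ⁅(⊤ : LieIdeal ℂ L), (⊤ : LieIdeal ℂ L)⁆) ≃ₗ[ℂ]
      (Polynomial ℂ ⧸ Ideal.span {p})) ∧
    Module.finrank ℂ (L ⧸ ⁅(⊤ : LieIdeal ℂ L), (⊤ : LieIdeal ℂ L)⁆) = 3 := by
  obtain ⟨hb0, hb1, hb2⟩ := hb
  have hbil' : ∀ (q : Polynomial ℂ) (u v : L), ⁅u, q • v⁆ = q • ⁅u, v⁆ := by
    intro q u v
    rw [← lie_skew, hbil, ← smul_neg, lie_skew]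
  have halg : ∀ (c : ℂ) (x : L), c • x = (Polynomial.C c) • x := fun c x => by
    rw [← algebraMap_smul (Polynomial ℂ) c x, Polynomial.algebraMap_eq]
  have hHE' : ⁅H, E⁆ = Polynomial.C (2:ℂ) • E := by rw [hHE, halg]
  have hHF' : ⁅H, F⁆ = Polynomial.C (-2:ℂ) • F := by rw [hHF, halg]
  have hEH : ⁅E, H⁆ = -(Polynomial.C (2:ℂ) • E) := by rw [← lie_skew, hHE']
  have hFH : ⁅F, H⁆ = -(Polynomial.C (-2:ℂ) • F) := by rw [← lie_skew, hHF']
  have hFE : ⁅F, E⁆ = -(p • H) := by rw [← lie_skew, hEF]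
  have hE2 : b.repr E 2 = 0 := by
    rw [← hb0, b.repr_self]; exact Finsupp.single_eq_of_ne (by decide)
  have hF2 : b.repr F 2 = 0 := by
    rw [← hb1, b.repr_self]; exact Finsupp.single_eq_of_ne (by decide)
  have hH2 : b.repr H 2 = 1 := by
    rw [← hb2, b.repr_self]; exact Finsupp.single_eq_same
  set I : Ideal (Polynomial ℂ) := Ideal.span {p} with hI
  let φ : L →ₗ[ℂ] Polynomial ℂ ⧸ I :=
    (I.mkQ.comp (b.coord 2)).restrictScalars ℂ
  have hφ : ∀ x : L, φ x = I.mkQ (b.repr x 2) := fun x => rfl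
  have key : ∀ u v : L, b.repr ⁅u, v⁆ 2 =
      (b.repr u 0 * b.repr v 1 - b.repr u 1 * b.repr v 0) * p := by
    intro u v
    conv_lhs => rw [← b.sum_repr u, ← b.sum_repr v]
    rw [Fin.sum_univ_three, Fin.sum_univ_three, hb0, hb1, hb2]
    simp only [add_lie, lie_add, hbil, hbil', lie_self, smul_zero, hEF, hFE, hEH, hFH,
      hHE', hHF', smul_neg, smul_smul, map_add, map_neg, map_smul, map_zero,
      Finsupp.add_apply, Finsupp.neg_apply, Finsupp.smul_apply, Finsupp.coe_zero,
      Pi.zero_apply, smul_eq_mul, hE2, hF2, hH2]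
    ring
  have hsurj : Function.Surjective φ := by
    intro y
    obtain ⟨q, rfl⟩ := Submodule.Quotient.mk_surjective I y
    refine ⟨q • H, ?_⟩
    rw [hφ, map_smul, Finsupp.smul_apply, hH2, smul_eq_mul, mul_one]
    rfl
  have hker : (LieSubmodule.toSubmodule
      (⁅(⊤ : LieIdeal ℂ L), (⊤ : LieIdeal ℂ L)⁆ : LieIdeal ℂ L)) = LinearMap.ker φ := by
    apply le_antisymm
    · rw [LieSubmodule.lieIdeal_oper_eq_linear_span]
      refine Submodule.span_le.2 ?_
      rintro m ⟨x, n, rfl⟩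
      simp only [SetLike.mem_coe, LinearMap.mem_ker, hφ, key]
      rw [Submodule.mkQ_apply, Submodule.Quotient.mk_eq_zero]
      exact Ideal.mem_span_singleton.2 (dvd_mul_left p _)
    · intro x hx
      rw [LinearMap.mem_ker, hφ] at hx
      rw [Submodule.mkQ_apply, Submodule.Quotient.mk_eq_zero] at hx
      obtain ⟨q, hq⟩ := Ideal.mem_span_singleton'.1 hx
      have hx' : (b.repr x 0) • E + (b.repr x 1) • F + (q * p) • H = x := by
        rw [hq]
        conv_rhs => rw [← b.sum_repr x]
        rw [Fin.sum_univ_three, hb0, hb1, hb2]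
      rw [← hx']
      have mem_lie : ∀ u v : L, ⁅u, v⁆ ∈
          (⁅(⊤ : LieIdeal ℂ L), (⊤ : LieIdeal ℂ L)⁆ : LieIdeal ℂ L) := fun u v =>
        LieSubmodule.lie_mem_lie (LieSubmodule.mem_top u) (LieSubmodule.mem_top v)
      refine add_mem (add_mem ?_ ?_) ?_
      · have h : (b.repr x 0) • E = ⁅(b.repr x 0 * Polynomial.C ((2:ℂ)⁻¹)) • H, E⁆ := by
          rw [hbil, hHE', smul_smul, mul_assoc, ← Polynomial.C_mul,
            inv_mul_cancel₀ (two_ne_zero), Polynomial.C_1, mul_one]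
        rw [h]; exact mem_lie _ _
      · have h : (b.repr x 1) • F = ⁅(b.repr x 1 * Polynomial.C ((-2:ℂ)⁻¹)) • H, F⁆ := by
          rw [hbil, hHF', smul_smul, mul_assoc, ← Polynomial.C_mul,
            inv_mul_cancel₀ (by norm_num), Polynomial.C_1, mul_one]
        rw [h]; exact mem_lie _ _
      · have h : (q * p) • H = ⁅q • E, F⁆ := by
          rw [hbil, hEF, smul_smul]
        rw [h]; exact mem_lie _ _
  have e : (L ⧸ ⁅(⊤ : LieIdeal ℂ L), (⊤ : LieIdeal ℂ L)⁆) ≃ₗ[ℂ]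
      (Polynomial ℂ ⧸ I) :=
    (Submodule.quotEquivOfEq _ _ hker).trans (φ.quotKerEquivOfSurjective hsurj)
  have hp0 : p ≠ 0 := fun h => by simp [h] at hp
  have hdim : Module.finrank ℂ (Polynomial ℂ ⧸ I) = 3 := by
    have h := (AdjoinRoot.powerBasis hp0).finrank
    rw [AdjoinRoot.powerBasis_dim, Polynomial.natDegree_eq_of_degree_eq_some hp] at h
    exact h
  exact ⟨⟨e⟩, by rw [e.finrank_eq, hdim]⟩
end
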